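/- (Correctness of the preemptive-rise noise mitigation.) Let φ > 0 and ψ > 0 be real numbers and set φ' = φ + 2ψ. Define x mod φ' = x - φ'·⌊x/φ'⌋. Let m, k, γ be real numbers with 0 ≤ m < φ, 0 ≤ k < φ', and |γ| ≤ ψ. Then the preemptive-rise decryption of the noisy cryptogram exactly recovers the plaintext plus noise: ((((m + k + ψ) mod φ') + γ) - k) mod φ' - ψ = m + γ. In particular, as long as the noise magnitude does not exceed the buffer width ψ, the modulo operation introduces no additional distortion. -/

import Mathlib

/-- The real-valued modulo operation: `rmod x n = x - n * ⌊x / n⌋`. -/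
noncomputable def rmod (x n : ℝ) : ℝ := x - n * ⌊x / n⌋

lemma rmod_eq_self {x n : ℝ} (hn : 0 < n) (h0 : 0 ≤ x) (h1 : x < n) :
    rmod x n = x := by
  have : ⌊x / n⌋ = 0 := by
    rw [Int.floor_eq_zero_iff]
    constructor
    · positivity
    · rw [div_lt_one hn]; exact h1
  simp [rmod, this]

lemma rmod_sub_int (x n : ℝ) (hn : 0 < n) (j : ℤ) :
    rmod (x - n * j) n = rmod x n := by
  have hne : n ≠ 0 := hn.ne'
  have : (x - n * j) / n = x / n - j := by field_simp
  simp only [rmod, this, Int.floor_sub_intCast]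
  push_cast
  ring

/-- **Correctness of the preemptive-rise noise mitigation.** With buffer width
`ψ > 0` and enlarged modulus `φ' = φ + 2ψ`, for any plaintext magnitude
`m ∈ [0, φ)`, key `k ∈ [0, φ')` and noise `γ` with `|γ| ≤ ψ`, the preemptive-rise
decryption of the noisy cryptogram recovers `m + γ` exactly:
`(((m + k + ψ) mod φ') + γ - k) mod φ' - ψ = m + γ`. -/
theorem vpsc_preemptive_rise_correctness (φ ψ : ℝ) (hφ : 0 < φ) (hψ : 0 < ψ)
    (m k γ : ℝ) (hm0 : 0 ≤ m) (hmφ : m < φ)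
    (hk0 : 0 ≤ k) (hkφ' : k < φ + 2 * ψ) (hγ : |γ| ≤ ψ) :
    rmod (rmod (m + k + ψ) (φ + 2 * ψ) + γ - k) (φ + 2 * ψ) - ψ = m + γ := by
  set n := φ + 2 * ψ with hn
  have hnpos : 0 < n := by positivity
  obtain ⟨hγ1, hγ2⟩ := abs_le.mp hγ
  have harg : rmod (m + k + ψ) n + γ - k = (m + ψ + γ) - n * ⌊(m + k + ψ) / n⌋ := by
    simp only [rmod]; ring
  rw [harg, rmod_sub_int _ _ hnpos, rmod_eq_self hnpos (by linarith) (by linarith)]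
  ring
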